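/- Let n ≥ 1 be an integer, g > 0 real, and let f and h be symmetric polynomials in n complex variables. For ρ > 0 define (f,h)_ρ = (1/n!) (∏_{j=1}^n ∮_{|z_j|=ρ} dz_j/(2πi z_j)) (∏_{j≠k}^n (1 − z_j/z_k))^g · f(z) · h̄(1/z_1,…,1/z_n), where h̄ is the polynomial whose coefficients are the complex conjugates of those of h. Then (f,h)_ρ is independent of ρ: for all ρ, ρ' > 0, (f,h)_ρ = (f,h)_{ρ'}. -/

import Mathlib

noncomputable section

/-- `(1/(2πi)) ∮_{|w|=ρ} f(w)/w dw`, i.e. the contour integral `∮ dz/(2πiz) f(z)`. -/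
def circAvg (ρ : ℝ) (f : ℂ → ℂ) : ℂ :=
  (2 * (Real.pi : ℂ) * Complex.I)⁻¹ * ∮ w in C(0, ρ), f w / w

/-- Iterated contour integral `∏_{k=1}^M ∮_{|z_k|=ρ} dz_k/(2πiz_k)`. -/
def multiCirc : (M : ℕ) → ℝ → ((Fin M → ℂ) → ℂ) → ℂ
  | 0, _, f => f fun i => i.elim0
  | M + 1, ρ, f => circAvg ρ fun w => multiCirc M ρ fun v => f (Fin.cons w v)

/-- The scalar product `(f,h)_ρ = (1/n!) (∏_j ∮_{|z_j|=ρ} dz_j/(2πiz_j))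
(∏_{j≠k}(1-z_j/z_k))^g f(z) h̄(1/z)`, where `h̄` has the complex conjugate coefficients. -/
def prodInner (n : ℕ) (g : ℝ) (f h : MvPolynomial (Fin n) ℂ) (ρ : ℝ) : ℂ :=
  ((Nat.factorial n : ℂ))⁻¹ *
    multiCirc n ρ fun z =>
      (∏ j : Fin n, ∏ k : Fin n, if j ≠ k then 1 - z j / z k else 1) ^ (g : ℂ) *
        MvPolynomial.eval z f *
        MvPolynomial.eval (fun j => (z j)⁻¹) (MvPolynomial.map (starRingEnd ℂ) h)

namespace S15

open MeasureTheory Complex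

instance : Fact (0 < 2 * Real.pi) := ⟨Real.two_pi_pos⟩

abbrev 𝕋 := AddCircle (2 * Real.pi)

def e (x : 𝕋) : ℂ := (AddCircle.toCircle x : ℂ)

lemma e_coe (θ : ℝ) : e (θ : 𝕋) = Complex.exp (θ * Complex.I) := by
  rw [e, AddCircle.toCircle_apply_mk, div_self (Real.two_pi_pos.ne'), one_mul, Circle.coe_exp]

lemma e_norm (x : 𝕋) : ‖e x‖ = 1 := by
  rw [e]; exact Circle.norm_coe _

lemma e_ne_zero (x : 𝕋) : e x ≠ 0 := by
  intro h; have := e_norm x; rw [h] at this; simp at this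

lemma e_add (x y : 𝕋) : e (x + y) = e x * e y := by
  rw [e, AddCircle.toCircle_add]; push_cast; rfl

lemma continuous_e : Continuous e :=
  continuous_induced_dom.comp AddCircle.continuous_toCircle

lemma measurable_e : Measurable e := continuous_e.measurable

lemma circAvg_eq (ρ : ℝ) (hρ : ρ ≠ 0) (f : ℂ → ℂ) :
    circAvg ρ f = (2 * Real.pi : ℂ)⁻¹ * ∫ θ in (0:ℝ)..(2*Real.pi), f (ρ * Complex.exp (θ * Complex.I)) := by
  rw [circAvg, circleIntegral]
  have h1 : ∀ θ : ℝ, deriv (circleMap 0 ρ) θ • (f (circleMap 0 ρ θ) / circleMap 0 ρ θ)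
      = Complex.I * f (ρ * Complex.exp (θ * Complex.I)) := by
    intro θ
    have hne : circleMap 0 ρ θ ≠ 0 := by
      simp [circleMap_zero, hρ, Complex.exp_ne_zero]
    rw [deriv_circleMap, smul_eq_mul]
    rw [circleMap_zero] at hne ⊢
    have hρc : (ρ:ℂ) ≠ 0 := Complex.ofReal_ne_zero.mpr hρ
    field_simp
  rw [intervalIntegral.integral_congr (g := fun θ : ℝ => Complex.I * f (ρ * Complex.exp (θ * Complex.I))) (fun θ _ => h1 θ)]
  rw [intervalIntegral.integral_const_mul]
  have hI : (Complex.I : ℂ) ≠ 0 := Complex.I_ne_zero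
  have hπ : (2 * Real.pi : ℂ) ≠ 0 := by
    simp [Real.pi_ne_zero]
  field_simp



lemma circAvg_scale (ρ : ℝ) (hρ : 0 < ρ) (f : ℂ → ℂ) :
    circAvg ρ f = circAvg 1 (fun w => f (ρ * w)) := by
  rw [circAvg_eq ρ hρ.ne' f, circAvg_eq 1 one_ne_zero]
  norm_num

lemma multiCirc_scale (M : ℕ) (ρ : ℝ) (hρ : 0 < ρ) (F : (Fin M → ℂ) → ℂ) :
    multiCirc M ρ F = multiCirc M 1 (fun z => F (fun j => (ρ:ℂ) * z j)) := by
  induction M with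
  | zero => simp only [multiCirc]; congr 1; funext i; exact i.elim0
  | succ M ih =>
    rw [multiCirc, multiCirc, circAvg_scale ρ hρ]
    congr 1
    funext w
    rw [ih]
    congr 1
    funext v
    congr 1
    funext j
    refine Fin.cases ?_ ?_ j <;> simp

lemma circAvg_torus (f : ℂ → ℂ) :
    circAvg 1 f = (2 * Real.pi : ℂ)⁻¹ * ∫ x : 𝕋, f (e x) := by
  rw [circAvg_eq 1 one_ne_zero]
  congr 1
  have := AddCircle.intervalIntegral_preimage (2 * Real.pi) 0 (fun x : 𝕋 => f (e x))
  rw [zero_add] at this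
  rw [← this]
  refine intervalIntegral.integral_congr fun θ _ => ?_
  rw [e_coe]
  norm_num


lemma measurable_consmap (M : ℕ) :
    Measurable (fun p : 𝕋 × (Fin M → 𝕋) => (Fin.cons (e p.1) (fun i => e (p.2 i)) : Fin (M+1) → ℂ)) := by
  apply measurable_pi_lambda
  intro j
  refine Fin.cases ?_ ?_ j
  · simp only [Fin.cons_zero]; exact measurable_e.comp measurable_fst
  · intro i
    simp only [Fin.cons_succ]; exact measurable_e.comp ((measurable_pi_apply i).comp measurable_snd)

lemma multiCirc_torus (M : ℕ) (F : (Fin M → ℂ) → ℂ) (hF : Measurable F) (C : ℝ)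
    (hC : ∀ z : Fin M → ℂ, (∀ j, ‖z j‖ = 1) → ‖F z‖ ≤ C) :
    multiCirc M 1 F
      = ((2 * Real.pi : ℂ)⁻¹)^M * ∫ x : Fin M → 𝕋, F (fun j => e (x j)) := by
  induction M with
  | zero =>
      rw [multiCirc]
      rw [show (volume : Measure (Fin 0 → 𝕋)) = Measure.pi (fun _ => volume) from rfl]
      rw [Measure.pi_of_empty]
      rw [integral_dirac]
      simp only [pow_zero, one_mul]
      congr 1
      funext i
      exact i.elim0
  | succ M ih =>
      rw [multiCirc, circAvg_torus]
      have hsec : ∀ w : ℂ, Measurable (fun v : Fin M → ℂ => F (Fin.cons w v)) := by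
        intro w
        apply hF.comp
        apply measurable_pi_lambda
        intro j
        refine Fin.cases ?_ ?_ j
        · simp only [Fin.cons_zero]; exact measurable_const
        · intro i; simp only [Fin.cons_succ]; exact measurable_pi_apply i
      have hstep : ∀ x : 𝕋, multiCirc M 1 (fun v => F (Fin.cons (e x) v))
          = ((2 * Real.pi : ℂ)⁻¹)^M * ∫ y : Fin M → 𝕋, F (Fin.cons (e x) (fun j => e (y j))) := by
        intro x
        apply ih _ (hsec (e x))
        intro z hz
        apply hC
        intro j
        refine Fin.cases ?_ ?_ j
        · simpa using e_norm x
        · intro i; simpa using hz i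
      simp only [hstep]
      rw [MeasureTheory.integral_const_mul]
      have key : (∫ x : 𝕋, ∫ y : Fin M → 𝕋, F (Fin.cons (e x) (fun j => e (y j))))
          = ∫ z : Fin (M+1) → 𝕋, F (fun j => e (z j)) := by
        have hmeas : Measurable (fun p : 𝕋 × (Fin M → 𝕋) => F (Fin.cons (e p.1) (fun i => e (p.2 i)))) :=
          hF.comp (measurable_consmap M)
        have hint : Integrable (fun p : 𝕋 × (Fin M → 𝕋) => F (Fin.cons (e p.1) (fun i => e (p.2 i))))
            (volume.prod volume) := by
          refine ⟨hmeas.aestronglyMeasurable, ?_⟩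
          apply MeasureTheory.HasFiniteIntegral.of_bounded (C := C)
          filter_upwards with p
          apply hC
          intro j
          refine Fin.cases ?_ ?_ j
          · simpa using e_norm p.1
          · intro i; simpa using e_norm (p.2 i)
        have h2 := MeasureTheory.integral_integral (μ := (volume : Measure 𝕋))
          (ν := (volume : Measure (Fin M → 𝕋)))
          (f := fun x y => F (Fin.cons (e x) (fun j => e (y j)))) hint
        rw [h2]
        -- now map prod to pi
        have hmp := MeasureTheory.measurePreserving_piFinSuccAbove
          (fun _ : Fin (M+1) => (volume : Measure 𝕋)) 0
        have hcomp := hmp.integral_comp (MeasurableEquiv.measurableEmbedding _)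
          (fun p : 𝕋 × (Fin M → 𝕋) => F (Fin.cons (e p.1) (fun i => e (p.2 i))))
        rw [show (volume : Measure (Fin (M+1) → 𝕋)) = Measure.pi (fun _ => volume) from rfl,
          show (volume : Measure (Fin M → 𝕋)) = Measure.pi (fun _ => volume) from rfl]
        rw [← hcomp]
        refine MeasureTheory.integral_congr_ae (Filter.Eventually.of_forall fun z => ?_)
        simp only [MeasurableEquiv.piFinSuccAbove_apply]
        congr 1
        funext j
        refine Fin.cases ?_ ?_ j
        · simp
        · intro i; simp [Fin.removeNth, Fin.tail]
      rw [key, pow_succ]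
      ring


variable {n : ℕ} {g : ℝ}

def Vg (n : ℕ) (g : ℝ) (z : Fin n → ℂ) : ℂ :=
  (∏ j : Fin n, ∏ k : Fin n, if j ≠ k then 1 - z j / z k else 1) ^ (g : ℂ)

lemma Vg_scale {c : ℂ} (hc : c ≠ 0) (z : Fin n → ℂ) :
    Vg n g (fun j => c * z j) = Vg n g z := by
  unfold Vg
  have hb : (∏ j : Fin n, ∏ k : Fin n, if j ≠ k then 1 - (c * z j) / (c * z k) else 1)
      = ∏ j : Fin n, ∏ k : Fin n, if j ≠ k then 1 - z j / z k else 1 := by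
    refine Finset.prod_congr rfl fun j _ => Finset.prod_congr rfl fun k _ => ?_
    split_ifs
    · rw [mul_div_mul_left _ _ hc]
    · rfl
  rw [hb]

lemma measurable_cpow_const (c : ℂ) : Measurable fun w : ℂ => w ^ c := by
  have h : (fun w : ℂ => w ^ c)
      = fun w => if w = 0 then (if c = 0 then 1 else 0) else Complex.exp (Complex.log w * c) := by
    funext w; rw [Complex.cpow_def]
  rw [h]
  refine Measurable.ite ?_ measurable_const ?_
  · simpa [Set.setOf_eq_eq_singleton] using (MeasurableSet.singleton (0:ℂ))
  · exact Complex.measurable_exp.comp (Complex.measurable_log.mul_const c)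

lemma measurable_Vg : Measurable (Vg n g) := by
  apply (measurable_cpow_const (g:ℂ)).comp
  refine Finset.measurable_prod _ fun j _ => ?_
  refine Finset.measurable_prod _ fun k _ => ?_
  by_cases hjk : j = k
  · simp [hjk]
  · simp only [if_neg, hjk, ne_eq, not_false_eq_true, if_true]
    exact (measurable_const.sub ((measurable_pi_apply j).div (measurable_pi_apply k)))

lemma norm_Vg_le (hg : 0 < g) (z : Fin n → ℂ) (hz : ∀ j, ‖z j‖ = 1) :
    ‖Vg n g z‖ ≤ ((2:ℝ)^(n*n)) ^ g := by
  set P := ∏ j : Fin n, ∏ k : Fin n, if j ≠ k then 1 - z j / z k else 1 with hP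
  have habs : ‖P‖ ≤ (2:ℝ)^(n*n) := by
    rw [hP, norm_prod]
    calc ∏ j : Fin n, ‖(∏ k : Fin n, if j ≠ k then 1 - z j / z k else 1)‖
        ≤ ∏ j : Fin n, (2:ℝ)^n := by
          refine Finset.prod_le_prod (fun _ _ => norm_nonneg _) fun j _ => ?_
          rw [norm_prod]
          calc ∏ k : Fin n, ‖(if j ≠ k then 1 - z j / z k else 1)‖
              ≤ ∏ _k : Fin n, (2:ℝ) := by
                refine Finset.prod_le_prod (fun _ _ => norm_nonneg _) fun k _ => ?_
                split_ifs
                · refine (norm_sub_le _ _).trans ?_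
                  have : ‖z j / z k‖ = 1 := by
                    rw [norm_div]
                    rw [hz j, hz k]
                    norm_num
                  simp only [norm_one, this]; norm_num
                · simp
            _ = (2:ℝ)^n := by simp
      _ = (2:ℝ)^(n*n) := by rw [Finset.prod_const]; simp [pow_mul']
  by_cases hP0 : P = 0
  · unfold Vg
    rw [← hP, hP0, Complex.zero_cpow (by exact_mod_cast hg.ne')]
    simp
    positivity
  · unfold Vg
    rw [← hP, Complex.norm_cpow_of_ne_zero hP0]
    simp only [Complex.ofReal_re, Complex.ofReal_im, zero_mul, mul_zero, Real.exp_zero, div_one]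
    exact Real.rpow_le_rpow (norm_nonneg _) habs hg.le


def TT (n : ℕ) (g : ℝ) (α β : Fin n →₀ ℕ) (x : Fin n → 𝕋) : ℂ :=
  Vg n g (fun j => e (x j)) * (∏ j : Fin n, e (x j) ^ α j) * (∏ j : Fin n, (e (x j))⁻¹ ^ β j)

def AA (n : ℕ) (g : ℝ) (α β : Fin n →₀ ℕ) : ℂ := ∫ x : Fin n → 𝕋, TT n g α β x

lemma measurable_exn : Measurable fun x : Fin n → 𝕋 => (fun j => e (x j)) := by
  exact measurable_pi_lambda _ fun j => measurable_e.comp (measurable_pi_apply j)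

lemma measurable_TT (α β : Fin n →₀ ℕ) : Measurable (TT n g α β) := by
  refine ((measurable_Vg.comp measurable_exn).mul ?_).mul ?_
  · refine Finset.measurable_prod _ fun j _ => ?_
    exact (measurable_e.comp (measurable_pi_apply j)).pow_const _
  · refine Finset.measurable_prod _ fun j _ => ?_
    exact (measurable_e.comp (measurable_pi_apply j)).inv.pow_const _

lemma norm_TT_le (hg : 0 < g) (α β : Fin n →₀ ℕ) (x : Fin n → 𝕋) :
    ‖TT n g α β x‖ ≤ ((2:ℝ)^(n*n)) ^ g := by
  unfold TT
  rw [norm_mul, norm_mul]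
  have h1 : ‖∏ j : Fin n, e (x j) ^ α j‖ = 1 := by
    rw [norm_prod]
    refine Finset.prod_eq_one fun j _ => ?_
    rw [norm_pow, e_norm, one_pow]
  have h2 : ‖∏ j : Fin n, (e (x j))⁻¹ ^ β j‖ = 1 := by
    rw [norm_prod]
    refine Finset.prod_eq_one fun j _ => ?_
    rw [norm_pow, norm_inv, e_norm, inv_one, one_pow]
  rw [h1, h2, mul_one, mul_one]
  exact norm_Vg_le hg _ fun j => e_norm (x j)

lemma integrable_TT (hg : 0 < g) (α β : Fin n →₀ ℕ) :
    Integrable (TT n g α β) (volume : Measure (Fin n → 𝕋)) := by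
  refine ⟨(measurable_TT α β).aestronglyMeasurable, ?_⟩
  apply MeasureTheory.HasFiniteIntegral.of_bounded (C := ((2:ℝ)^(n*n)) ^ g)
  filter_upwards with x
  exact norm_TT_le hg α β x

lemma TT_shift (α β : Fin n →₀ ℕ) (s : 𝕋) (x : Fin n → 𝕋) :
    TT n g α β ((fun _ : Fin n => s) + x)
      = (e s)^(∑ j, α j) * ((e s)⁻¹)^(∑ j, β j) * TT n g α β x := by
  unfold TT
  have hadd : ∀ j : Fin n, e (((fun _ : Fin n => s) + x) j) = e s * e (x j) := by
    intro j; rw [Pi.add_apply, e_add]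
  simp only [hadd]
  rw [Vg_scale (e_ne_zero s)]
  have h1 : (∏ j : Fin n, (e s * e (x j)) ^ α j)
      = (e s)^(∑ j, α j) * ∏ j : Fin n, e (x j) ^ α j := by
    simp only [mul_pow]
    rw [Finset.prod_mul_distrib, Finset.prod_pow_eq_pow_sum]
  have h2 : (∏ j : Fin n, (e s * e (x j))⁻¹ ^ β j)
      = ((e s)⁻¹)^(∑ j, β j) * ∏ j : Fin n, (e (x j))⁻¹ ^ β j := by
    simp only [mul_inv, mul_pow]
    rw [Finset.prod_mul_distrib, Finset.prod_pow_eq_pow_sum]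
  rw [h1, h2]
  ring

lemma AA_eq_zero (hg : 0 < g) (α β : Fin n →₀ ℕ) (hne : (∑ j, α j) ≠ ∑ j, β j) :
    AA n g α β = 0 := by
  have inv : ∀ s : 𝕋, AA n g α β
      = (e s)^(∑ j, α j) * ((e s)⁻¹)^(∑ j, β j) * AA n g α β := by
    intro s
    calc AA n g α β = ∫ x : Fin n → 𝕋, TT n g α β ((fun _ => s) + x) :=
          (MeasureTheory.integral_add_left_eq_self (TT n g α β) (fun _ => s)).symm
      _ = ∫ x : Fin n → 𝕋, (e s)^(∑ j, α j) * ((e s)⁻¹)^(∑ j, β j) * TT n g α β x := by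
          simp only [TT_shift]
      _ = (e s)^(∑ j, α j) * ((e s)⁻¹)^(∑ j, β j) * AA n g α β := by
          rw [MeasureTheory.integral_const_mul]; rfl
  set a := ∑ j, α j
  set b := ∑ j, β j
  have hd : ((a:ℤ) - b) ≠ 0 := by
    simp only [ne_eq, sub_eq_zero]
    exact_mod_cast hne
  set θ : ℝ := Real.pi / ((a:ℤ) - (b:ℤ) : ℤ)
  have hu : e (θ : 𝕋) = Complex.exp (θ * Complex.I) := e_coe θ
  have hune : Complex.exp (θ * Complex.I) ≠ 0 := Complex.exp_ne_zero _
  have key : (e (θ:𝕋))^a * ((e (θ:𝕋))⁻¹)^b = -1 := by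
    rw [hu, inv_pow, ← zpow_natCast (Complex.exp (θ * Complex.I)) a,
      ← zpow_natCast (Complex.exp (θ * Complex.I)) b, ← zpow_neg,
      ← zpow_add₀ hune]
    rw [← Complex.exp_int_mul]
    have hθ : (((a:ℤ) - (b:ℤ) : ℤ) : ℝ) * θ = Real.pi := by
      have h0 : (((a:ℤ) - (b:ℤ) : ℤ) : ℝ) ≠ 0 := by exact_mod_cast hd
      show (((a:ℤ) - (b:ℤ) : ℤ) : ℝ) * (Real.pi / (((a:ℤ) - (b:ℤ) : ℤ) : ℝ)) = Real.pi
      rw [mul_comm, div_mul_cancel₀ _ h0]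
    have hkey2 : (((a:ℤ) + -(b:ℤ) : ℤ) : ℂ) * ((θ:ℂ) * Complex.I) = (Real.pi : ℂ) * Complex.I := by
      calc (((a:ℤ) + -(b:ℤ) : ℤ) : ℂ) * ((θ:ℂ) * Complex.I)
          = ((((((a:ℤ) - (b:ℤ)) : ℤ) : ℝ) * θ : ℝ) : ℂ) * Complex.I := by push_cast; ring
        _ = (Real.pi : ℂ) * Complex.I := by rw [hθ]
    rw [hkey2, Complex.exp_pi_mul_I]
  have h2 := inv (θ : 𝕋)
  rw [key] at h2
  have : (2:ℂ) * AA n g α β = 0 := by linear_combination h2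
  simpa using this


lemma K_expand (f h' : MvPolynomial (Fin n) ℂ) {c : ℂ} (hc : c ≠ 0) (x : Fin n → 𝕋) :
    Vg n g (fun j => c * e (x j)) * MvPolynomial.eval (fun j => c * e (x j)) f *
      MvPolynomial.eval (fun j => (c * e (x j))⁻¹) h'
    = ∑ p ∈ f.support ×ˢ h'.support,
        (f.coeff p.1 * h'.coeff p.2 * c^(∑ j, p.1 j) * (c⁻¹)^(∑ j, p.2 j)) * TT n g p.1 p.2 x := by
  rw [Vg_scale hc, MvPolynomial.eval_eq', MvPolynomial.eval_eq', Finset.sum_product]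
  rw [mul_assoc, Finset.sum_mul_sum]
  simp only [Finset.mul_sum]
  refine Finset.sum_congr rfl fun α _ => Finset.sum_congr rfl fun β _ => ?_
  have hprod1 : (∏ j : Fin n, (c * e (x j))^(α j)) = c^(∑ j, α j) * ∏ j : Fin n, e (x j)^(α j) := by
    simp only [mul_pow]
    rw [Finset.prod_mul_distrib, Finset.prod_pow_eq_pow_sum]
  have hprod2 : (∏ j : Fin n, ((c * e (x j))⁻¹)^(β j))
      = (c⁻¹)^(∑ j, β j) * ∏ j : Fin n, ((e (x j))⁻¹)^(β j) := by
    simp only [mul_inv, mul_pow]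
    rw [Finset.prod_mul_distrib, Finset.prod_pow_eq_pow_sum]
  rw [hprod1, hprod2]
  unfold TT
  ring


lemma measurable_eval (p : MvPolynomial (Fin n) ℂ) (u : (Fin n → ℂ) → (Fin n → ℂ))
    (hu : Measurable u) : Measurable fun z => MvPolynomial.eval (u z) p := by
  simp only [MvPolynomial.eval_eq']
  refine Finset.measurable_sum _ fun d _ => ?_
  refine Measurable.const_mul ?_ _
  refine Finset.measurable_prod _ fun j _ => ?_
  exact ((measurable_pi_apply j).comp hu).pow_const _

lemma norm_eval_le (p : MvPolynomial (Fin n) ℂ) (w : Fin n → ℂ) (r : ℝ) (hr : 0 ≤ r)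
    (hw : ∀ j, ‖w j‖ = r) :
    ‖MvPolynomial.eval w p‖ ≤ ∑ d ∈ p.support, ‖p.coeff d‖ * r^(∑ j, d j) := by
  rw [MvPolynomial.eval_eq']
  refine (norm_sum_le _ _).trans ?_
  refine Finset.sum_le_sum fun d _ => ?_
  rw [norm_mul]
  refine mul_le_mul_of_nonneg_left (le_of_eq ?_) (norm_nonneg _)
  rw [norm_prod, ← Finset.prod_pow_eq_pow_sum]
  exact Finset.prod_congr rfl fun j _ => by rw [norm_pow, hw j]




lemma prodInner_formula (hg : 0 < g) (f h : MvPolynomial (Fin n) ℂ) (ρ : ℝ) (hρ : 0 < ρ) :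
    prodInner n g f h ρ
      = (Nat.factorial n : ℂ)⁻¹ * (((2 * Real.pi : ℂ))⁻¹)^n *
        ∑ p ∈ f.support ×ˢ (MvPolynomial.map (starRingEnd ℂ) h).support,
          (f.coeff p.1 * (MvPolynomial.map (starRingEnd ℂ) h).coeff p.2 *
            (ρ:ℂ)^(∑ j, p.1 j) * ((ρ:ℂ)⁻¹)^(∑ j, p.2 j)) * AA n g p.1 p.2 := by
  set h' := MvPolynomial.map (starRingEnd ℂ) h with hh'
  have hρc : ((ρ:ℂ)) ≠ 0 := by
    simpa using hρ.ne'
  rw [prodInner, multiCirc_scale n ρ hρ]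
  have hF : (fun z : Fin n → ℂ =>
      (∏ j : Fin n, ∏ k : Fin n, if j ≠ k then 1 - ((ρ:ℂ) * z j) / ((ρ:ℂ) * z k) else 1) ^ (g : ℂ) *
        MvPolynomial.eval (fun j => (ρ:ℂ) * z j) f *
        MvPolynomial.eval (fun j => ((ρ:ℂ) * z j)⁻¹) h')
      = fun z : Fin n → ℂ => Vg n g (fun j => (ρ:ℂ) * z j) *
          MvPolynomial.eval (fun j => (ρ:ℂ) * z j) f *
          MvPolynomial.eval (fun j => ((ρ:ℂ) * z j)⁻¹) h' := rfl
  have hmeasF : Measurable (fun z : Fin n → ℂ => Vg n g (fun j => (ρ:ℂ) * z j) *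
      MvPolynomial.eval (fun j => (ρ:ℂ) * z j) f *
      MvPolynomial.eval (fun j => ((ρ:ℂ) * z j)⁻¹) h') := by
    have hsc : Measurable (fun z : Fin n → ℂ => (fun j => (ρ:ℂ) * z j)) :=
      measurable_pi_lambda _ fun j => (measurable_pi_apply j).const_mul _
    have hscinv : Measurable (fun z : Fin n → ℂ => (fun j => ((ρ:ℂ) * z j)⁻¹)) :=
      measurable_pi_lambda _ fun j => ((measurable_pi_apply j).const_mul _).inv
    exact ((measurable_Vg.comp hsc).mul (measurable_eval f _ hsc)).mul
      (by
        have := measurable_eval h' _ hscinv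
        simpa using this)
  set Cf : ℝ := ∑ d ∈ f.support, ‖f.coeff d‖ * ρ^(∑ j, d j) with hCf
  set Ch : ℝ := ∑ d ∈ h'.support, ‖h'.coeff d‖ * (ρ⁻¹)^(∑ j, d j) with hCh
  have hCf0 : 0 ≤ Cf := Finset.sum_nonneg fun d _ => by positivity
  have hCh0 : 0 ≤ Ch := Finset.sum_nonneg fun d _ => by positivity
  have hbound : ∀ z : Fin n → ℂ, (∀ j, ‖z j‖ = 1) →
      ‖Vg n g (fun j => (ρ:ℂ) * z j) *
        MvPolynomial.eval (fun j => (ρ:ℂ) * z j) f *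
        MvPolynomial.eval (fun j => ((ρ:ℂ) * z j)⁻¹) h'‖ ≤ ((2:ℝ)^(n*n))^g * (Cf * Ch) := by
    intro z hz
    rw [norm_mul, norm_mul]
    have hV : ‖Vg n g (fun j => (ρ:ℂ) * z j)‖ ≤ ((2:ℝ)^(n*n))^g := by
      rw [Vg_scale hρc]
      exact norm_Vg_le hg z hz
    have hA : ‖MvPolynomial.eval (fun j => (ρ:ℂ) * z j) f‖ ≤ Cf := by
      refine norm_eval_le f _ ρ hρ.le fun j => ?_
      rw [norm_mul, hz j, mul_one, Complex.norm_real, Real.norm_of_nonneg hρ.le]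
    have hB : ‖MvPolynomial.eval (fun j => ((ρ:ℂ) * z j)⁻¹) h'‖ ≤ Ch := by
      refine norm_eval_le h' _ ρ⁻¹ (by positivity) fun j => ?_
      rw [norm_inv, norm_mul, hz j, mul_one, Complex.norm_real, Real.norm_of_nonneg hρ.le]
    calc ‖Vg n g (fun j => (ρ:ℂ) * z j)‖ * ‖MvPolynomial.eval (fun j => (ρ:ℂ) * z j) f‖ *
          ‖MvPolynomial.eval (fun j => ((ρ:ℂ) * z j)⁻¹) h'‖
        ≤ ((2:ℝ)^(n*n))^g * Cf * Ch := by
          refine mul_le_mul (mul_le_mul hV hA (norm_nonneg _) (by positivity)) hB (norm_nonneg _) ?_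
          positivity
      _ = ((2:ℝ)^(n*n))^g * (Cf * Ch) := by ring
  rw [hF, multiCirc_torus n _ hmeasF _ hbound]
  have hpt : (fun x : Fin n → 𝕋 => Vg n g (fun j => (ρ:ℂ) * e (x j)) *
      MvPolynomial.eval (fun j => (ρ:ℂ) * e (x j)) f *
      MvPolynomial.eval (fun j => ((ρ:ℂ) * e (x j))⁻¹) h')
      = fun x => ∑ p ∈ f.support ×ˢ h'.support,
          (f.coeff p.1 * h'.coeff p.2 * (ρ:ℂ)^(∑ j, p.1 j) * ((ρ:ℂ)⁻¹)^(∑ j, p.2 j)) *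
            TT n g p.1 p.2 x :=
    funext fun x => K_expand f h' hρc x
  rw [hpt]
  rw [MeasureTheory.integral_finset_sum _ fun p _ =>
    (integrable_TT hg p.1 p.2).const_mul _]
  simp only [MeasureTheory.integral_const_mul]
  rw [← mul_assoc]
  rfl

end S15

/-- for symmetric polynomials `f, h`, the scalar product `(f,h)_ρ` is
independent of the radius `ρ > 0`. -/
theorem statement15 (n : ℕ) (hn : 1 ≤ n) (g : ℝ) (hg : 0 < g)
    (f h : MvPolynomial (Fin n) ℂ) (hf : f.IsSymmetric) (hh : h.IsSymmetric) :
    ∀ ρ ρ' : ℝ, 0 < ρ → 0 < ρ' → prodInner n g f h ρ = prodInner n g f h ρ' := by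
  intro ρ ρ' hρ hρ'
  rw [S15.prodInner_formula hg f h ρ hρ, S15.prodInner_formula hg f h ρ' hρ']
  congr 1
  refine Finset.sum_congr rfl fun p _ => ?_
  by_cases hab : (∑ j, p.1 j) = ∑ j, p.2 j
  · have key : ∀ r : ℝ, 0 < r → ((r:ℂ))^(∑ j, p.2 j) * (((r:ℂ))⁻¹)^(∑ j, p.2 j) = 1 := by
      intro r hr
      rw [← mul_pow, mul_inv_cancel₀ (by simpa using hr.ne'), one_pow]
    rw [hab]
    have k1 := key ρ hρ
    have k2 := key ρ' hρ'
    set c1 := f.coeff p.1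
    set c2 := (MvPolynomial.map (starRingEnd ℂ) h).coeff p.2
    set A := S15.AA n g p.1 p.2
    linear_combination (c1 * c2 * A) * k1 - (c1 * c2 * A) * k2
  · rw [S15.AA_eq_zero hg p.1 p.2 hab]
    simp

end
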